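/- Let S, A¹, A² be finite nonempty sets, β ∈ [0,1), γ a probability distribution on S, p : S × A² → (S → ℝ) a transition kernel, and consider the mathematical program [MP2] with variables (u, z, f, x, δ¹, δ²) subject to: (i) u(s) ≤ ∑_{a¹} f(s,a¹)·C²(s,a¹,a²) + ∑_l δ²_l·∑_{a¹} f(s,a¹)·D²ˡ(s,a¹,a²) + β·∑_{s'} p(s'|s,a²)·u(s') for all (s,a²); (ii) z(s) ≤ ∑_{a²} C¹(s,a¹,a²)·x(s,a²) + ∑_k δ¹_k·d¹ᵏ(s,a¹) for all (s,a¹); (iii) ∑_{(s,a²)} (δ(s,s') − β·p(s'|s,a²))·x(s,a²) = (1−β)·γ(s') for all s'; (iv) ∑_{(s,a¹)} d¹ᵏ(s,a¹)·f(s,a¹) ≤ ξ¹_k for all k; (v) ∑_{(s,a¹,a²)} f(s,a¹)·D²ˡ(s,a¹,a²)·x(s,a²) ≤ ξ²_l for all l; (vi) ∑_{a¹} f(s,a¹) = 1 for all s; and f, x, δ¹, δ² ≥ 0. Then the objective Φ = (∑_{(s,a¹,a²)} f(s,a¹)·C¹(s,a¹,a²)·x(s,a²) − ∑_s z(s) +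 (δ¹)ᵀξ¹) + (∑_{(s,a¹,a²)} f(s,a¹)·C²(s,a¹,a²)·x(s,a²) − (1−β)·∑_s γ(s)·u(s) + (δ²)ᵀξ²) is nonnegative at every feasible point. -/

import Mathlib

private lemma MP2_aux_rot {α β γ : Type*} [Fintype α] [Fintype β] [Fintype γ]
    (g : α → β → γ → ℝ) :
    ∑ a, ∑ b, ∑ c, g a b c = ∑ b, ∑ c, ∑ a, g a b c := by
  calc ∑ a, ∑ b, ∑ c, g a b c = ∑ b, ∑ a, ∑ c, g a b c := Finset.sum_comm
    _ = ∑ b, ∑ c, ∑ a, g a b c := Finset.sum_congr rfl fun _ _ => Finset.sum_comm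

theorem MP2_objective_nonneg
    (S A1 A2 : Type) [Fintype S] [DecidableEq S] [Fintype A1] [Fintype A2]
    [Nonempty S] [Nonempty A1] [Nonempty A2]
    (n1 n2 : ℕ)
    (β : ℝ) (hβ0 : 0 ≤ β) (hβ1 : β < 1)
    (γ : S → ℝ) (hγ0 : ∀ s, 0 ≤ γ s) (hγ1 : ∑ s, γ s = 1)
    (C1 C2 : S → A1 → A2 → ℝ)
    (d1 : Fin n1 → S → A1 → ℝ) (ξ1 : Fin n1 → ℝ)
    (D2 : Fin n2 → S → A1 → A2 → ℝ) (ξ2 : Fin n2 → ℝ)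
    (p : S → A2 → S → ℝ)
    (hp0 : ∀ s a s', 0 ≤ p s a s')
    (hp1 : ∀ s a, ∑ s', p s a s' = 1)
    (u z : S → ℝ) (f : S → A1 → ℝ) (x : S → A2 → ℝ)
    (δ1 : Fin n1 → ℝ) (δ2 : Fin n2 → ℝ)
    (h1 : ∀ s a2, u s ≤ (∑ a1, f s a1 * C2 s a1 a2)
        + (∑ l, δ2 l * ∑ a1, f s a1 * D2 l s a1 a2)
        + β * ∑ s', p s a2 s' * u s')
    (h2 : ∀ s a1, z s ≤ (∑ a2, C1 s a1 a2 * x s a2) + ∑ k, δ1 k * d1 k s a1)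
    (h3 : ∀ s', ∑ s, ∑ a2,
      ((if s = s' then (1 : ℝ) else 0) - β * p s a2 s') * x s a2
        = (1 - β) * γ s')
    (h4 : ∀ k, ∑ s, ∑ a1, d1 k s a1 * f s a1 ≤ ξ1 k)
    (h5 : ∀ l, ∑ s, ∑ a1, ∑ a2, f s a1 * D2 l s a1 a2 * x s a2 ≤ ξ2 l)
    (h6 : ∀ s, ∑ a1, f s a1 = 1)
    (h7 : ∀ s a1, 0 ≤ f s a1)
    (h8 : ∀ s a2, 0 ≤ x s a2)
    (h9 : ∀ k, 0 ≤ δ1 k)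
    (h10 : ∀ l, 0 ≤ δ2 l) :
    0 ≤ ((∑ s, ∑ a1, ∑ a2, f s a1 * C1 s a1 a2 * x s a2)
          - (∑ s, z s) + ∑ k, δ1 k * ξ1 k)
      + ((∑ s, ∑ a1, ∑ a2, f s a1 * C2 s a1 a2 * x s a2)
          - (1 - β) * (∑ s, γ s * u s) + ∑ l, δ2 l * ξ2 l) := by
  classical
  -- Part 1
  have hz : ∀ s, z s ≤ (∑ a1, ∑ a2, f s a1 * C1 s a1 a2 * x s a2)
      + ∑ k, δ1 k * ∑ a1, d1 k s a1 * f s a1 := by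
    intro s
    have step : z s ≤ ∑ a1, f s a1 * ((∑ a2, C1 s a1 a2 * x s a2) + ∑ k, δ1 k * d1 k s a1) := by
      calc z s = ∑ a1, f s a1 * z s := by rw [← Finset.sum_mul, h6 s, one_mul]
        _ ≤ _ := Finset.sum_le_sum (fun a1 _ => mul_le_mul_of_nonneg_left (h2 s a1) (h7 s a1))
    refine step.trans_eq ?_
    simp only [mul_add, Finset.mul_sum, Finset.sum_add_distrib]
    congr 1
    · exact Finset.sum_congr rfl fun a1 _ => Finset.sum_congr rfl fun a2 _ => by ring
    · rw [Finset.sum_comm]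
      exact Finset.sum_congr rfl fun k _ => Finset.sum_congr rfl fun a1 _ => by ring
  have part1 : (∑ s, z s) ≤ (∑ s, ∑ a1, ∑ a2, f s a1 * C1 s a1 a2 * x s a2)
      + ∑ k, δ1 k * ξ1 k := by
    calc (∑ s, z s) ≤ ∑ s, ((∑ a1, ∑ a2, f s a1 * C1 s a1 a2 * x s a2)
          + ∑ k, δ1 k * ∑ a1, d1 k s a1 * f s a1) := Finset.sum_le_sum (fun s _ => hz s)
      _ = (∑ s, ∑ a1, ∑ a2, f s a1 * C1 s a1 a2 * x s a2)
          + ∑ k, δ1 k * ∑ s, ∑ a1, d1 k s a1 * f s a1 := by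
          rw [Finset.sum_add_distrib]
          congr 1
          rw [Finset.sum_comm]
          exact Finset.sum_congr rfl fun k _ => by rw [Finset.mul_sum]
      _ ≤ _ := add_le_add_right (Finset.sum_le_sum fun k _ =>
          mul_le_mul_of_nonneg_left (h4 k) (h9 k)) _
  -- Part 2: flow identity
  have inner : ∀ s a2, (∑ s', ((if s = s' then (1:ℝ) else 0) - β * p s a2 s') * x s a2 * u s')
      = u s * x s a2 - β * (x s a2 * ∑ s', p s a2 s' * u s') := by
    intro s a2
    simp only [sub_mul, ite_mul, one_mul, zero_mul, Finset.sum_sub_distrib,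
      Finset.sum_ite_eq, Finset.mem_univ, if_true]
    have : ∑ s', β * p s a2 s' * x s a2 * u s'
        = β * (x s a2 * ∑ s', p s a2 s' * u s') := by
      rw [Finset.mul_sum, Finset.mul_sum]
      exact Finset.sum_congr rfl fun s' _ => by ring
    rw [this]; ring
  have key : (1 - β) * (∑ s, γ s * u s)
      = (∑ s, ∑ a2, u s * x s a2)
        - β * ∑ s, ∑ a2, x s a2 * ∑ s', p s a2 s' * u s' := by
    have hT : (1 - β) * (∑ s, γ s * u s)
        = ∑ s', (∑ s, ∑ a2, ((if s = s' then (1:ℝ) else 0) - β * p s a2 s') * x s a2) * u s' := by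
      rw [Finset.mul_sum]
      exact Finset.sum_congr rfl fun s' _ => by rw [h3 s']; ring
    rw [hT]
    have push : ∀ s', (∑ s, ∑ a2, ((if s = s' then (1:ℝ) else 0) - β * p s a2 s') * x s a2) * u s'
        = ∑ s, ∑ a2, ((if s = s' then (1:ℝ) else 0) - β * p s a2 s') * x s a2 * u s' := by
      intro s'
      rw [Finset.sum_mul]
      exact Finset.sum_congr rfl fun s _ => by rw [Finset.sum_mul]
    rw [Finset.sum_congr rfl fun s' _ => push s']
    rw [MP2_aux_rot (fun s' s a2 => ((if s = s' then (1:ℝ) else 0) - β * p s a2 s') * x s a2 * u s')]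
    rw [Finset.sum_congr rfl fun s _ => Finset.sum_congr rfl fun a2 _ => inner s a2]
    simp only [Finset.sum_sub_distrib, Finset.mul_sum]
  -- multiply h1 by x and sum
  have hux : (∑ s, ∑ a2, u s * x s a2)
      ≤ ∑ s, ∑ a2, (((∑ a1, f s a1 * C2 s a1 a2)
        + (∑ l, δ2 l * ∑ a1, f s a1 * D2 l s a1 a2)
        + β * ∑ s', p s a2 s' * u s') * x s a2) :=
    Finset.sum_le_sum fun s _ => Finset.sum_le_sum fun a2 _ =>
      mul_le_mul_of_nonneg_right (h1 s a2) (h8 s a2)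
  have expand : ∑ s, ∑ a2, (((∑ a1, f s a1 * C2 s a1 a2)
        + (∑ l, δ2 l * ∑ a1, f s a1 * D2 l s a1 a2)
        + β * ∑ s', p s a2 s' * u s') * x s a2)
      = (∑ s, ∑ a1, ∑ a2, f s a1 * C2 s a1 a2 * x s a2)
        + (∑ l, δ2 l * ∑ s, ∑ a1, ∑ a2, f s a1 * D2 l s a1 a2 * x s a2)
        + β * ∑ s, ∑ a2, x s a2 * ∑ s', p s a2 s' * u s' := by
    have split : ∀ s a2, ((∑ a1, f s a1 * C2 s a1 a2)
        + (∑ l, δ2 l * ∑ a1, f s a1 * D2 l s a1 a2)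
        + β * ∑ s', p s a2 s' * u s') * x s a2
        = (∑ a1, f s a1 * C2 s a1 a2 * x s a2)
          + (∑ l, δ2 l * ∑ a1, f s a1 * D2 l s a1 a2 * x s a2)
          + β * (x s a2 * ∑ s', p s a2 s' * u s') := by
      intro s a2
      have t2 : (∑ l, δ2 l * ∑ a1, f s a1 * D2 l s a1 a2) * x s a2
          = ∑ l, δ2 l * ∑ a1, f s a1 * D2 l s a1 a2 * x s a2 := by
        rw [Finset.sum_mul]
        exact Finset.sum_congr rfl fun l _ => by rw [mul_assoc, Finset.sum_mul]
      rw [add_mul, add_mul, Finset.sum_mul, t2]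
      ring
    rw [Finset.sum_congr rfl fun s _ => Finset.sum_congr rfl fun a2 _ => split s a2]
    simp only [Finset.sum_add_distrib]
    congr 1
    · congr 1
      · exact Finset.sum_congr rfl fun s _ => Finset.sum_comm
      · rw [MP2_aux_rot (fun s a2 l => δ2 l * ∑ a1, f s a1 * D2 l s a1 a2 * x s a2)]
        rw [Finset.sum_comm]
        refine Finset.sum_congr rfl fun l _ => ?_
        rw [Finset.sum_comm, Finset.mul_sum]
        refine Finset.sum_congr rfl fun s _ => ?_
        rw [← Finset.mul_sum]
        congr 1
        exact Finset.sum_comm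
    · rw [Finset.mul_sum]
      exact Finset.sum_congr rfl fun s _ => by rw [Finset.mul_sum]
  have part2 : (1 - β) * (∑ s, γ s * u s)
      ≤ (∑ s, ∑ a1, ∑ a2, f s a1 * C2 s a1 a2 * x s a2) + ∑ l, δ2 l * ξ2 l := by
    have step := hux.trans_eq expand
    have hδ : (∑ l, δ2 l * ∑ s, ∑ a1, ∑ a2, f s a1 * D2 l s a1 a2 * x s a2)
        ≤ ∑ l, δ2 l * ξ2 l :=
      Finset.sum_le_sum fun l _ => mul_le_mul_of_nonneg_left (h5 l) (h10 l)
    rw [key]; linarith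
  linarith
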